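/- In a graded connected unital shuffle algebra, if X = 1 + a ≺ X is the solution of the left half-shuffle fixed point equation for a of positive degree, then a = (X − 1) ≺ X^{−1}, where X^{−1} is the shuffle-inverse of X. Analogously, if Z = 1 + Z ≻ b then b = Z^{−1} ≻ (Z − 1). -/

import Mathlib

/-- A shuffle (dendriform) algebra over a field `k`: a `k`-vector space `D` with two
bilinear half-shuffle products `≺` (`prec`) and `≻` (`succ`) satisfying
`(a ≺ b) ≺ c = a ≺ (b ⧢ c)`, `(a ≻ b) ≺ c = a ≻ (b ≺ c)`, `a ≻ (b ≻ c) = (a ⧢ b) ≻ c`,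
where `a ⧢ b := a ≺ b + a ≻ b`. -/
class ShuffleAlgebra (k : Type*) (D : Type*) [Field k] [AddCommGroup D] [Module k D] where
  prec : D →ₗ[k] D →ₗ[k] D
  succ : D →ₗ[k] D →ₗ[k] D
  prec_prec : ∀ a b c : D, prec (prec a b) c = prec a (prec b c + succ b c)
  succ_prec : ∀ a b c : D, prec (succ a b) c = succ a (prec b c)
  succ_succ : ∀ a b c : D, succ a (succ b c) = succ (prec a b + succ a b) c

variable (k : Type*) {D : Type*} [Field k] [AddCommGroup D] [Module k D] [ShuffleAlgebra k D]

/-- The left half-shuffle product `a ≺ b`. -/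
def hsPrec (a b : D) : D := ShuffleAlgebra.prec (k := k) a b

/-- The right half-shuffle product `a ≻ b`. -/
def hsSucc (a b : D) : D := ShuffleAlgebra.succ (k := k) a b

/-- The shuffle product `a ⧢ b := a ≺ b + a ≻ b`. -/
def hsShuffle (a b : D) : D := hsPrec k a b + hsSucc k a b

/-!
Formal-series model of a graded connected unital shuffle algebra (cf. the paper, which
works "with formal series expansions ... insuring convergence in the formal sense"):
the positive-degree part is the space `ℕ → D` of formal series
`x = Σ_{n ≥ 0} xₙ t^{n+1}` with coefficients in a shuffle algebra `D` (the coefficient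
`x n` sits in degree `n + 1`, so there is no degree-zero component), and the unital
augmentation is `k × (ℕ → D) = k·1 ⊕ (ℕ → D)`, with the unit conventions
`a ≺ 1 = a = 1 ≻ a`, `1 ≺ a = 0 = a ≻ 1`, `1 ⧢ 1 = 1`.
All infinite sums are finite in each degree.
-/

/-- `≺` on positive-degree formal series. -/
def cprec (x y : ℕ → D) : ℕ → D := fun n =>
  match n with
  | 0 => 0
  | n + 1 => ∑ p ∈ Finset.HasAntidiagonal.antidiagonal n, hsPrec k (x p.1) (y p.2)

/-- `≻` on positive-degree formal series. -/
def csucc (x y : ℕ → D) : ℕ → D := fun n =>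
  match n with
  | 0 => 0
  | n + 1 => ∑ p ∈ Finset.HasAntidiagonal.antidiagonal n, hsSucc k (x p.1) (y p.2)

/-- `⧢` on positive-degree formal series. -/
def csh (x y : ℕ → D) : ℕ → D := cprec k x y + csucc k x y

/-- The unit `1` of the unital augmentation `k·1 ⊕ (ℕ → D)`. -/
def uone : k × (ℕ → D) := (1, 0)

/-- The inclusion of the positive-degree part into the unital augmentation. -/
def uinj (a : ℕ → D) : k × (ℕ → D) := (0, a)

/-- The shuffle product `⧢` on the unital augmentation (using `1 ⧢ X = X = X ⧢ 1`). -/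
def ush (X Y : k × (ℕ → D)) : k × (ℕ → D) :=
  (X.1 * Y.1, X.1 • Y.2 + Y.1 • X.2 + csh k X.2 Y.2)

/-- `a ≺ X` for `a` of positive degree and `X` in the unital augmentation
(using `a ≺ 1 = a`). -/
def uprec (a : ℕ → D) (X : k × (ℕ → D)) : ℕ → D := X.1 • a + cprec k a X.2

/-- `X ≻ a` for `a` of positive degree and `X` in the unital augmentation
(using `1 ≻ a = a`). -/
def usucc (X : k × (ℕ → D)) (a : ℕ → D) : ℕ → D := X.1 • a + csucc k X.2 a

/-- `a^{≺(m+1)}`, i.e. `precPow k a m = a^{≺(m+1)}` (and `a^{≺0} = 1`). -/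
def precPow (a : ℕ → D) : ℕ → (ℕ → D)
  | 0 => a
  | m + 1 => cprec k a (precPow a m)

/-- `a^{≻(m+1)}`. -/
def succPow (a : ℕ → D) : ℕ → (ℕ → D)
  | 0 => a
  | m + 1 => csucc k (succPow a m) a

/-- `a^{⧢(m+1)}`. -/
def shPow (a : ℕ → D) : ℕ → (ℕ → D)
  | 0 => a
  | m + 1 => csh k a (shPow a m)

/-- The left half-shuffle exponential `exp^≺(a) = 1 + Σ_{n>0} a^{≺n}`
(the sum is finite in each degree). -/
def expPrec (a : ℕ → D) : k × (ℕ → D) :=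
  (1, fun n => ∑ m ∈ Finset.range (n + 1), precPow k a m n)

/-- The right half-shuffle exponential `exp^≻(a) = 1 + Σ_{n>0} a^{≻n}`. -/
def expSucc (a : ℕ → D) : k × (ℕ → D) :=
  (1, fun n => ∑ m ∈ Finset.range (n + 1), succPow k a m n)

/-- The shuffle exponential `exp^⧢(a) = 1 + Σ_{n>0} a^{⧢n}/n!`. -/
noncomputable def expSh (a : ℕ → D) : k × (ℕ → D) :=
  (1, fun n => ∑ m ∈ Finset.range (n + 1), (((m + 1).factorial : k))⁻¹ • shPow k a m n)


lemma sum_ad_assoc {M : Type*} [AddCommMonoid M] (T : ℕ → ℕ → ℕ → M) (m : ℕ) :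
    ∑ p ∈ Finset.HasAntidiagonal.antidiagonal m, ∑ q ∈ Finset.HasAntidiagonal.antidiagonal p.1, T q.1 q.2 p.2
    = ∑ p ∈ Finset.HasAntidiagonal.antidiagonal m, ∑ q ∈ Finset.HasAntidiagonal.antidiagonal p.2, T p.1 q.1 q.2 := by
  rw [Finset.sum_sigma', Finset.sum_sigma']
  apply Finset.sum_nbij' (i := fun x => ⟨(x.2.1, x.2.2 + x.1.2), (x.2.2, x.1.2)⟩)
    (j := fun x => ⟨(x.1.1 + x.2.1, x.2.2), (x.1.1, x.2.1)⟩)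
  all_goals rintro ⟨⟨p1, p2⟩, ⟨q1, q2⟩⟩ h
  all_goals simp only [Finset.mem_sigma, Finset.HasAntidiagonal.mem_antidiagonal] at h ⊢
  all_goals obtain ⟨h1, h2⟩ := h
  all_goals first
    | exact ⟨by omega, trivial⟩
    | rw [h2]
    | rfl

def sconv (B : D →ₗ[k] D →ₗ[k] D) (x y : ℕ → D) : ℕ → D := fun n =>
  match n with
  | 0 => 0
  | n + 1 => ∑ p ∈ Finset.HasAntidiagonal.antidiagonal n, B (x p.1) (y p.2)

lemma cprec_eq_sconv (x y : ℕ → D) :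
    cprec k x y = sconv k (ShuffleAlgebra.prec (k := k)) x y := by
  funext n; cases n <;> rfl

lemma csucc_eq_sconv (x y : ℕ → D) :
    csucc k x y = sconv k (ShuffleAlgebra.succ (k := k)) x y := by
  funext n; cases n <;> rfl

lemma csh_eq_sconv (x y : ℕ → D) :
    csh k x y = sconv k (ShuffleAlgebra.prec (k := k) + ShuffleAlgebra.succ (k := k)) x y := by
  funext n
  cases n with
  | zero => simp [csh, cprec, csucc, sconv]
  | succ n =>
      simp [csh, cprec, csucc, sconv, hsPrec, hsSucc, Finset.sum_add_distrib]

/-- The shifted-convolution associativity lemma. -/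
lemma sconv_assoc (B1 B2 B3 B4 : D →ₗ[k] D →ₗ[k] D)
    (h : ∀ a b c : D, B1 (B2 a b) c = B3 a (B4 b c)) (x y z : ℕ → D) :
    sconv k B1 (sconv k B2 x y) z = sconv k B3 x (sconv k B4 y z) := by
  funext n
  match n with
  | 0 => rfl
  | 1 =>
      simp [sconv]
  | n + 2 =>
      show ∑ p ∈ Finset.HasAntidiagonal.antidiagonal (n + 1), B1 (sconv k B2 x y p.1) (z p.2)
        = ∑ p ∈ Finset.HasAntidiagonal.antidiagonal (n + 1), B3 (x p.1) (sconv k B4 y z p.2)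
      rw [Finset.Nat.sum_antidiagonal_succ (f := fun p => B1 (sconv k B2 x y p.1) (z p.2)),
        Finset.Nat.sum_antidiagonal_succ' (f := fun p => B3 (x p.1) (sconv k B4 y z p.2))]
      simp only [show sconv k B2 x y 0 = 0 from rfl, show sconv k B4 y z 0 = 0 from rfl,
        map_zero, LinearMap.zero_apply, zero_add]
      show ∑ p ∈ Finset.HasAntidiagonal.antidiagonal n,
            B1 (∑ q ∈ Finset.HasAntidiagonal.antidiagonal p.1, B2 (x q.1) (y q.2)) (z p.2)
          = ∑ p ∈ Finset.HasAntidiagonal.antidiagonal n,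
            B3 (x p.1) (∑ q ∈ Finset.HasAntidiagonal.antidiagonal p.2, B4 (y q.1) (z q.2))
      simp only [map_sum, LinearMap.sum_apply]
      rw [sum_ad_assoc (fun i j l => B1 (B2 (x i) (y j)) (z l)) n]
      simp [h]

lemma cprec_cprec (a x y : ℕ → D) :
    cprec k (cprec k a x) y = cprec k a (csh k x y) := by
  rw [cprec_eq_sconv, cprec_eq_sconv, cprec_eq_sconv, csh_eq_sconv]
  exact sconv_assoc k _ _ _ _
    (fun a b c => by
      simp only [LinearMap.add_apply]; exact ShuffleAlgebra.prec_prec a b c) a x y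

lemma csucc_csucc (x y b : ℕ → D) :
    csucc k x (csucc k y b) = csucc k (csh k x y) b := by
  simp only [csucc_eq_sconv, csh_eq_sconv]
  exact (sconv_assoc k _ _ _ _
    (fun a b c => by
      simp only [LinearMap.add_apply]; exact (ShuffleAlgebra.succ_succ a b c).symm) x y b).symm

-- linearity lemmas
lemma cprec_zero_right (a : ℕ → D) : cprec k a 0 = 0 := by
  funext n; cases n <;> simp [cprec, hsPrec]

lemma csucc_zero_left (a : ℕ → D) : csucc k 0 a = 0 := by
  funext n; cases n <;> simp [csucc, hsSucc]

lemma cprec_add_left (u v y : ℕ → D) :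
    cprec k (u + v) y = cprec k u y + cprec k v y := by
  funext n; cases n <;> simp [cprec, hsPrec, Finset.sum_add_distrib]

lemma cprec_smul_left (c : k) (u y : ℕ → D) :
    cprec k (c • u) y = c • cprec k u y := by
  funext n; cases n <;> simp [cprec, hsPrec, Finset.smul_sum]

lemma cprec_add_right (a u v : ℕ → D) :
    cprec k a (u + v) = cprec k a u + cprec k a v := by
  funext n; cases n <;> simp [cprec, hsPrec, Finset.sum_add_distrib]

lemma cprec_smul_right (c : k) (a u : ℕ → D) :
    cprec k a (c • u) = c • cprec k a u := by
  funext n; cases n <;> simp [cprec, hsPrec, Finset.smul_sum]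

lemma csucc_add_left (u v y : ℕ → D) :
    csucc k (u + v) y = csucc k u y + csucc k v y := by
  funext n; cases n <;> simp [csucc, hsSucc, Finset.sum_add_distrib]

lemma csucc_smul_left (c : k) (u y : ℕ → D) :
    csucc k (c • u) y = c • csucc k u y := by
  funext n; cases n <;> simp [csucc, hsSucc, Finset.smul_sum]

lemma csucc_add_right (a u v : ℕ → D) :
    csucc k a (u + v) = csucc k a u + csucc k a v := by
  funext n; cases n <;> simp [csucc, hsSucc, Finset.sum_add_distrib]

lemma csucc_smul_right (c : k) (a u : ℕ → D) :
    csucc k a (c • u) = c • csucc k a u := by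
  funext n; cases n <;> simp [csucc, hsSucc, Finset.smul_sum]

lemma uprec_uprec (a : ℕ → D) (X Y : k × (ℕ → D)) :
    uprec k (uprec k a X) Y = uprec k a (ush k X Y) := by
  simp only [uprec, ush, csh]
  simp only [cprec_add_left, cprec_smul_left, cprec_cprec, csh, cprec_add_right,
    cprec_smul_right]
  module

lemma usucc_usucc (b : ℕ → D) (X Y : k × (ℕ → D)) :
    usucc k Y (usucc k X b) = usucc k (ush k Y X) b := by
  simp only [usucc, ush, csh]
  simp only [csucc_add_right, csucc_smul_right, csucc_csucc, csh, csucc_add_left,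
    csucc_smul_left]
  module


/-- in a graded connected unital shuffle algebra, if `X = 1 + a ≺ X`
then `a = (X − 1) ≺ X⁻¹`, where `X⁻¹` is the shuffle-inverse of `X`; analogously,
if `Z = 1 + Z ≻ b` then `b = Z⁻¹ ≻ (Z − 1)`. -/
theorem halfshuffle_logarithm_of_fixed_point :
    (∀ (a : ℕ → D) (X Xinv : k × (ℕ → D)),
        X = uone k + uinj k (uprec k a X) →
        ush k X Xinv = uone k → ush k Xinv X = uone k →
        a = uprec k (X - uone k).2 Xinv) ∧
    (∀ (b : ℕ → D) (Z Zinv : k × (ℕ → D)),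
        Z = uone k + uinj k (usucc k Z b) →
        ush k Z Zinv = uone k → ush k Zinv Z = uone k →
        b = usucc k Zinv (Z - uone k).2) := by
  constructor
  · intro a X Xinv hX h1 h2
    have hX2 : (X - uone k).2 = uprec k a X := by
      conv_lhs => rw [hX]
      simp [uone, uinj]
    rw [hX2, uprec_uprec, h1]
    simp [uprec, uone, cprec_zero_right]
  · intro b Z Zinv hZ h1 h2
    have hZ2 : (Z - uone k).2 = usucc k Z b := by
      conv_lhs => rw [hZ]
      simp [uone, uinj]
    rw [hZ2, usucc_usucc, h2]
    simp [usucc, uone, csucc_zero_left]
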